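/- Suppose z : [0,∞) → ℝⁿ is twice differentiable, g : ℝⁿ → ℝ is twice continuously differentiable, l : ℝⁿ → ℝ is convex and differentiable, α, β : [0,∞) → ℝ are differentiable with β'(t) ≤ e^{α(t)} and β' ≥ 0, and z satisfies the Bregman dynamics d/dt[∇g(z(t) + e^{−α(t)} ż(t))] = −e^{α(t)+β(t)} ∇l(z(t)). Then the function V(t) = d_g(z*, z(t) + e^{−α(t)} ż(t)) + e^{β(t)}(l(z(t)) − l(z*)) is nonincreasing in t, where z* is a minimizer of l and d_g is the Bregman divergence of g. -/

import Mathlib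

open RealInnerProductSpace

lemma convex_inner_le {n : ℕ} {l : EuclideanSpace ℝ (Fin n) → ℝ}
    (hl : ConvexOn ℝ Set.univ l) (hld : Differentiable ℝ l)
    (x y : EuclideanSpace ℝ (Fin n)) :
    ⟪gradient l x, y - x⟫ ≤ l y - l x := by
  set φ : ℝ → ℝ := fun s => l (x + s • (y - x)) with hφ
  have hc : HasDerivAt (fun u : ℝ => x + u • (y - x)) (y - x) 0 := by
    simpa using ((hasDerivAt_id (0:ℝ)).smul_const (y - x)).const_add x
  have h0 : (x + (0:ℝ) • (y - x)) = x := by simp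
  have hφd : HasDerivAt φ ⟪gradient l x, y - x⟫ 0 := by
    have hf : HasFDerivAt l ((InnerProductSpace.toDual ℝ (EuclideanSpace ℝ (Fin n))) (gradient l x)) (x + (0:ℝ) • (y - x)) := by
      rw [h0]; exact (hld x).hasGradientAt.hasFDerivAt
    have h1 := hf.comp_hasDerivAt 0 hc
    rw [InnerProductSpace.toDual_apply_apply] at h1; exact h1
  have hφc : ConvexOn ℝ Set.univ φ := by
    have h := hl.comp_affineMap (AffineMap.lineMap x y)
    have he : (l ∘ (AffineMap.lineMap x y)) = φ := by
      funext s
      simp [φ, AffineMap.lineMap_apply, add_comm]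
    simpa [he] using h
  have := hφc.le_slope_of_hasDerivAt (Set.mem_univ 0) (Set.mem_univ 1) one_pos hφd
  simpa [slope, φ] using this

noncomputable def bregman {n : ℕ} (g : EuclideanSpace ℝ (Fin n) → ℝ)
    (y x : EuclideanSpace ℝ (Fin n)) : ℝ :=
  g y - g x - ⟪gradient g x, y - x⟫

theorem bregman_lyapunov_antitone {n : ℕ}
    (g l : EuclideanSpace ℝ (Fin n) → ℝ)
    (hg : ContDiff ℝ 2 g) (hsc : StrictConvexOn ℝ Set.univ g)
    (hl : ConvexOn ℝ Set.univ l) (hld : Differentiable ℝ l)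
    (zstar : EuclideanSpace ℝ (Fin n)) (hmin : ∀ z, l zstar ≤ l z)
    (α β : ℝ → ℝ) (hα : Differentiable ℝ α) (hβ : Differentiable ℝ β)
    (hβ' : ∀ t, deriv β t ≤ Real.exp (α t)) (hβ'' : ∀ t, 0 ≤ deriv β t)
    (z : ℝ → EuclideanSpace ℝ (Fin n))
    (hz : Differentiable ℝ z) (hz2 : Differentiable ℝ (deriv z))
    (hode : ∀ t, deriv (fun s => gradient g (z s + Real.exp (-α s) • deriv z s)) t
      = -(Real.exp (α t + β t)) • gradient l (z t)) :
    AntitoneOn (fun t =>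
      bregman g zstar (z t + Real.exp (-α t) • deriv z t)
        + Real.exp (β t) * (l (z t) - l zstar)) (Set.Ici (0 : ℝ)) := by
  set w : ℝ → EuclideanSpace ℝ (Fin n) := fun t => z t + Real.exp (-α t) • deriv z t with hw_def
  set G : ℝ → EuclideanSpace ℝ (Fin n) := fun t => gradient g (w t) with hG_def
  have hgd : Differentiable ℝ g := hg.differentiable (by norm_num)
  have hgrad : Differentiable ℝ (gradient g) := by
    have h1 : ContDiff ℝ 1 (fderiv ℝ g) := hg.fderiv_right (by norm_num)
    exact ((InnerProductSpace.toDual ℝ (EuclideanSpace ℝ (Fin n))).symm.differentiable).comp (h1.differentiable (by norm_num))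
  have ha : Differentiable ℝ fun t => Real.exp (-α t) := (hα.neg).exp
  have hw : Differentiable ℝ w := hz.add (ha.smul hz2)
  have hG : Differentiable ℝ G := hgrad.comp hw
  -- the Lyapunov function
  set V : ℝ → ℝ := fun t => bregman g zstar (w t) + Real.exp (β t) * (l (z t) - l zstar)
    with hV_def
  -- derivative
  have key : ∀ t : ℝ, HasDerivAt V
      (Real.exp (α t + β t) * ⟪gradient l (z t), zstar - z t⟫
        + deriv β t * Real.exp (β t) * (l (z t) - l zstar)) t := by
    intro t
    have hwt : HasDerivAt w (deriv w t) t := (hw t).hasDerivAt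
    have hGt : HasDerivAt G (-(Real.exp (α t + β t)) • gradient l (z t)) t := by
      have h := (hG t).hasDerivAt
      rwa [show deriv G t = -(Real.exp (α t + β t)) • gradient l (z t) from hode t] at h
    -- deriv of g ∘ w
    have hgw : HasDerivAt (fun s => g (w s)) ⟪G t, deriv w t⟫ t := by
      have h1 := ((hgd (w t)).hasGradientAt.hasFDerivAt).comp_hasDerivAt t hwt
      rw [InnerProductSpace.toDual_apply_apply] at h1; exact h1
    -- deriv of inner term
    have hzw : HasDerivAt (fun s => zstar - w s) (-(deriv w t)) t := by
      have h := (hasDerivAt_const t zstar).sub hwt; rw [zero_sub] at h; exact h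
    have hinner : HasDerivAt (fun s => ⟪G s, zstar - w s⟫)
        (⟪G t, -(deriv w t)⟫ + ⟪-(Real.exp (α t + β t)) • gradient l (z t), zstar - w t⟫) t :=
      hGt.inner ℝ hzw
    -- deriv of l ∘ z
    have hlz : HasDerivAt (fun s => l (z s)) ⟪gradient l (z t), deriv z t⟫ t := by
      have h1 := ((hld (z t)).hasGradientAt.hasFDerivAt).comp_hasDerivAt t (hz t).hasDerivAt
      rw [InnerProductSpace.toDual_apply_apply] at h1; exact h1
    have hβe : HasDerivAt (fun s => Real.exp (β s)) (Real.exp (β t) * deriv β t) t :=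
      (hβ t).hasDerivAt.exp
    have hbig : HasDerivAt V
        ((0 - ⟪G t, deriv w t⟫ - (⟪G t, -(deriv w t)⟫ + ⟪-(Real.exp (α t + β t)) • gradient l (z t), zstar - w t⟫))
          + (Real.exp (β t) * deriv β t * (l (z t) - l zstar)
              + Real.exp (β t) * (⟪gradient l (z t), deriv z t⟫ - 0))) t := by
      have h1 : HasDerivAt (fun s => bregman g zstar (w s))
          (0 - ⟪G t, deriv w t⟫ - (⟪G t, -(deriv w t)⟫ + ⟪-(Real.exp (α t + β t)) • gradient l (z t), zstar - w t⟫)) t := by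
        exact ((hasDerivAt_const t (g zstar)).sub hgw).sub hinner
      have h2 : HasDerivAt (fun s => Real.exp (β s) * (l (z s) - l zstar))
          (Real.exp (β t) * deriv β t * (l (z t) - l zstar)
            + Real.exp (β t) * (⟪gradient l (z t), deriv z t⟫ - 0)) t :=
        hβe.mul (hlz.sub (hasDerivAt_const t (l zstar)))
      exact h1.add h2
    -- simplify the derivative value
    convert hbig using 1
    simp only [inner_neg_right, real_inner_smul_left, inner_sub_right, hw_def,
      inner_add_right, real_inner_smul_right]
    rw [Real.exp_add]
    have hea : Real.exp (α t) * Real.exp (-α t) = 1 := by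
      rw [← Real.exp_add]; simp
    linear_combination (Real.exp (β t) * ⟪gradient l (z t), deriv z t⟫) * hea
  have hVd : Differentiable ℝ V := fun t => (key t).differentiableAt
  apply antitoneOn_of_deriv_nonpos (convex_Ici 0) (hVd.continuous.continuousOn)
    (fun x _ => (hVd x).differentiableWithinAt)
  intro t _
  rw [(key t).deriv]
  have h1 : ⟪gradient l (z t), zstar - z t⟫ ≤ l zstar - l (z t) :=
    convex_inner_le hl hld (z t) zstar
  have h2 := hβ' t
  have h3 := hβ'' t
  have h4 := hmin (z t)
  have e1 : (0:ℝ) < Real.exp (α t + β t) := Real.exp_pos _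
  have e2 : (0:ℝ) < Real.exp (β t) := Real.exp_pos _
  have e3 : Real.exp (α t + β t) = Real.exp (α t) * Real.exp (β t) := Real.exp_add _ _
  nlinarith [mul_le_mul_of_nonneg_left h1 e1.le,
    mul_le_mul_of_nonneg_right h2 (mul_nonneg e2.le (sub_nonneg.2 h4))]
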